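/- Let G be a group such that G/D is finitely generated, where D = ⁅G,G⁆, and let D̃ be the preimage in G of the torsion subgroup of G/D. Then the natural surjective homomorphism D/⁅D,G⁆ → D/⁅D̃,G⁆ has finite kernel. -/

import Mathlib

open commutatorElement

private lemma comm_mul_right_aux {H : Type*} [Group H]
    (hc : ∀ x y : H, ⁅x, y⁆ ∈ Subgroup.center H) (x y z : H) :
    ⁅x, y * z⁆ = ⁅x, y⁆ * ⁅x, z⁆ := by
  have h : y⁻¹ * (x * z * x⁻¹ * z⁻¹) = x * z * x⁻¹ * z⁻¹ * y⁻¹ := by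
    have := Subgroup.mem_center_iff.mp (hc x z) y⁻¹
    simpa [commutatorElement_def] using this
  simp only [commutatorElement_def]
  calc x * (y * z) * x⁻¹ * (y * z)⁻¹
      = x * y * x⁻¹ * (x * z * x⁻¹ * z⁻¹ * y⁻¹) := by group
    _ = x * y * x⁻¹ * (y⁻¹ * (x * z * x⁻¹ * z⁻¹)) := by rw [← h]
    _ = x * y * x⁻¹ * y⁻¹ * (x * z * x⁻¹ * z⁻¹) := by group

private lemma comm_mul_left_aux {H : Type*} [Group H]
    (hc : ∀ x y : H, ⁅x, y⁆ ∈ Subgroup.center H) (x y z : H) :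
    ⁅x * y, z⁆ = ⁅x, z⁆ * ⁅y, z⁆ := by
  have h1 : x * (y * z * y⁻¹ * z⁻¹) = y * z * y⁻¹ * z⁻¹ * x := by
    have := Subgroup.mem_center_iff.mp (hc y z) x
    simpa [commutatorElement_def] using this
  have h2 : x * z * x⁻¹ * z⁻¹ * (y * z * y⁻¹ * z⁻¹)
      = y * z * y⁻¹ * z⁻¹ * (x * z * x⁻¹ * z⁻¹) := by
    have := Subgroup.mem_center_iff.mp (hc y z) (x * z * x⁻¹ * z⁻¹)
    simpa [commutatorElement_def] using this
  simp only [commutatorElement_def]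
  calc x * y * z * (x * y)⁻¹ * z⁻¹
      = x * (y * z * y⁻¹ * z⁻¹) * (z * x⁻¹ * z⁻¹) := by group
    _ = y * z * y⁻¹ * z⁻¹ * x * (z * x⁻¹ * z⁻¹) := by rw [h1]
    _ = y * z * y⁻¹ * z⁻¹ * (x * z * x⁻¹ * z⁻¹) := by group
    _ = x * z * x⁻¹ * z⁻¹ * (y * z * y⁻¹ * z⁻¹) := h2.symm

private lemma torsion_finite_of_fg (A : Type*) [CommGroup A] [Group.FG A] :
    Finite (CommGroup.torsion A) := by
  haveI : AddGroup.FG (Additive A) := inferInstance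
  haveI : Module.Finite ℤ (Additive A) := Module.Finite.iff_addGroup_fg.mpr inferInstance
  haveI := isNoetherian_of_isNoetherianRing_of_finite ℤ (Additive A)
  have hfgT : (CommGroup.torsion A).FG := by
    have := IsNoetherian.noetherian
      (AddSubgroup.toIntSubmodule ((CommGroup.torsion A).toAddSubgroup))
    rw [Submodule.fg_iff_addSubgroup_fg, AddSubgroup.toIntSubmodule_toAddSubgroup] at this
    exact (Subgroup.fg_iff_add_fg _).mpr this
  haveI : Group.FG ↥(CommGroup.torsion A) := (Group.fg_iff_subgroup_fg _).mpr hfgT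
  have htor : Monoid.IsTorsion ↥(CommGroup.torsion A) := by
    intro x
    have hx : IsOfFinOrder (x : A) := x.2
    rw [isOfFinOrder_iff_pow_eq_one] at hx ⊢
    obtain ⟨n, hn, h1⟩ := hx
    exact ⟨n, hn, by ext; simpa using h1⟩
  exact CommGroup.finite_of_fg_torsion _ htor

/-- Let `G` be a group with finitely generated abelianization `G/D`, `D = ⁅G,G⁆`, and
`D̃` the preimage in `G` of the torsion subgroup of `G/D`. The natural surjective
homomorphism `D/⁅D,G⁆ → D/⁅D̃,G⁆` has finite kernel. -/
theorem natural_surjection_finite_kernel (G : Type*) [Group G]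
    (hfg : Group.FG (Abelianization G)) :
    ∃ f : (commutator G ⧸
          ((⁅commutator G, (⊤ : Subgroup G)⁆ : Subgroup G).subgroupOf (commutator G))) →*
        (commutator G ⧸
          ((⁅(CommGroup.torsion (Abelianization G)).comap Abelianization.of,
              (⊤ : Subgroup G)⁆ : Subgroup G).subgroupOf (commutator G))),
      Function.Surjective f ∧
      (∀ x : commutator G, f (QuotientGroup.mk x) = QuotientGroup.mk x) ∧
      Finite f.ker := by
  classical
  set K : Subgroup G := ⁅commutator G, (⊤ : Subgroup G)⁆ with hK
  set Dt : Subgroup G := (CommGroup.torsion (Abelianization G)).comap Abelianization.of with hDt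
  set N : Subgroup G := ⁅Dt, (⊤ : Subgroup G)⁆ with hN
  have hDsub : commutator G ≤ Dt := by
    intro d hd
    have h1 : (Abelianization.of d : Abelianization G) = 1 := by
      rw [← MonoidHom.mem_ker, Abelianization.ker_of]
      exact hd
    rw [hDt]
    simp only [Subgroup.mem_comap, h1]
    exact Subgroup.one_mem _
  have hKN : K ≤ N := Subgroup.commutator_mono hDsub le_rfl
  -- the quotient by ⁅D, G⁆
  let π : G →* G ⧸ K := QuotientGroup.mk' K
  have hπsurj : Function.Surjective π := QuotientGroup.mk'_surjective K
  have hcent : ∀ c ∈ commutator G, π c ∈ Subgroup.center (G ⧸ K) := by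
    intro c hcG
    rw [Subgroup.mem_center_iff]
    intro z
    obtain ⟨g, rfl⟩ := hπsurj z
    rw [← map_mul, ← map_mul]
    have hmem : ⁅c⁻¹, g⁻¹⁆ ∈ K := hK ▸
      Subgroup.commutator_mem_commutator (Subgroup.inv_mem _ hcG) (Subgroup.mem_top _)
    refine (QuotientGroup.eq (s := K)).mpr ?_
    have he : (g * c)⁻¹ * (c * g) = ⁅c⁻¹, g⁻¹⁆ := by
      simp only [commutatorElement_def]; group
    rw [he]
    exact hmem
  have hcomm : ∀ x y : G ⧸ K, ⁅x, y⁆ ∈ Subgroup.center (G ⧸ K) := by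
    intro x y
    obtain ⟨a, rfl⟩ := hπsurj x
    obtain ⟨b, rfl⟩ := hπsurj y
    rw [← map_commutatorElement]
    exact hcent _ (Subgroup.commutator_mem_commutator (Subgroup.mem_top a) (Subgroup.mem_top b))
  -- the commutator maps, as homomorphisms
  let μ : (G ⧸ K) → (G ⧸ K) →* (G ⧸ K) := fun x =>
    { toFun := fun y => ⁅x, y⁆
      map_one' := by simp
      map_mul' := fun y z => comm_mul_right_aux hcomm x y z }
  let ν : (G ⧸ K) → (G ⧸ K) →* (G ⧸ K) := fun h =>
    { toFun := fun y => ⁅y, h⁆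
      map_one' := by simp
      map_mul' := fun y z => comm_mul_left_aux hcomm y z h }
  have hμker : ∀ x : G ⧸ K, commutator G ≤ ((μ x).comp π).ker := by
    intro x d hd
    show ⁅x, π d⁆ = 1
    exact commutatorElement_eq_one_iff_commute.mpr (Subgroup.mem_center_iff.mp (hcent d hd) x)
  have hνker : ∀ h : G ⧸ K, commutator G ≤ ((ν h).comp π).ker := by
    intro h d hd
    show ⁅π d, h⁆ = 1
    exact commutatorElement_eq_one_iff_commute.mpr
      ((Subgroup.mem_center_iff.mp (hcent d hd) h).symm)
  let μA : (G ⧸ K) → Abelianization G →* (G ⧸ K) := fun x =>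
    QuotientGroup.lift (commutator G) ((μ x).comp π) (hμker x)
  let νA : (G ⧸ K) → Abelianization G →* (G ⧸ K) := fun h =>
    QuotientGroup.lift (commutator G) ((ν h).comp π) (hνker h)
  have hμA : ∀ (x : G ⧸ K) (g : G), μA x (Abelianization.of g) = ⁅x, π g⁆ := fun x g => rfl
  have hνA : ∀ (h : G ⧸ K) (g : G), νA h (Abelianization.of g) = ⁅π g, h⁆ := fun h g => rfl
  -- finiteness of the torsion subgroup, generators of the abelianization
  haveI : Group.FG (Abelianization G) := hfg
  haveI hTfin : Finite (CommGroup.torsion (Abelianization G)) := torsion_finite_of_fg _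
  obtain ⟨S, hSclosure, hSfin⟩ := Group.fg_iff.mp hfg
  have hout : ∀ b : Abelianization G, Abelianization.of b.out = b := fun b =>
    QuotientGroup.out_eq' b
  -- the finite generating set of commutators
  let pf : Abelianization G × Abelianization G → G ⧸ K := fun p => ⁅π p.1.out, π p.2.out⁆
  let F : Set (G ⧸ K) :=
    pf '' ((CommGroup.torsion (Abelianization G) : Set (Abelianization G)) ×ˢ S)
  have hFfin : F.Finite := ((Set.toFinite _).prod hSfin).image _
  let L : Subgroup (G ⧸ K) := Subgroup.closure F
  have hgen : ∀ d ∈ Dt, ∀ g : G, π ⁅d, g⁆ ∈ L := by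
    intro d hd g
    rw [map_commutatorElement]
    have hd' : Abelianization.of d ∈ CommGroup.torsion (Abelianization G) :=
      Subgroup.mem_comap.mp (hDt ▸ hd)
    have e1 : ⁅π d, π g⁆ = ⁅π (Abelianization.of d).out, π g⁆ := by
      calc ⁅π d, π g⁆ = νA (π g) (Abelianization.of d) := (hνA _ d).symm
        _ = νA (π g) (Abelianization.of ((Abelianization.of d).out)) := by rw [hout]
        _ = ⁅π (Abelianization.of d).out, π g⁆ := hνA _ _
    rw [e1, show ⁅π (Abelianization.of d).out, π g⁆
        = μA (π (Abelianization.of d).out) (Abelianization.of g) from (hμA _ _).symm]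
    have hmemtop : Abelianization.of g ∈ Subgroup.closure S := by
      rw [hSclosure]; exact Subgroup.mem_top _
    have hmem : μA (π (Abelianization.of d).out) (Abelianization.of g) ∈
        Subgroup.closure ((μA (π (Abelianization.of d).out)) '' S) := by
      rw [← MonoidHom.map_closure]
      exact Subgroup.mem_map_of_mem _ hmemtop
    have himg : (μA (π (Abelianization.of d).out)) '' S ⊆ F := by
      rintro _ ⟨s, hs, rfl⟩
      refine ⟨(Abelianization.of d, s), ⟨hd', hs⟩, ?_⟩
      calc pf (Abelianization.of d, s) = ⁅π (Abelianization.of d).out, π s.out⁆ := rfl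
        _ = μA (π (Abelianization.of d).out) (Abelianization.of s.out) := (hμA _ _).symm
        _ = μA (π (Abelianization.of d).out) s := by rw [hout]
    exact Subgroup.closure_mono himg hmem
  -- L is a finite group
  have hLcent : L ≤ Subgroup.center (G ⧸ K) := by
    rw [Subgroup.closure_le]
    rintro _ ⟨p, hp, rfl⟩
    exact hcomm _ _
  haveI hLcomm : IsMulCommutative L := ⟨⟨fun x y =>
    Subtype.ext ((Subgroup.mem_center_iff.mp (hLcent x.2) y.1).symm)⟩⟩
  haveI hLfg : Group.FG ↥L := (Group.fg_iff_subgroup_fg L).mpr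
    ⟨hFfin.toFinset, by rw [Set.Finite.coe_toFinset]⟩
  have hLtor : Monoid.IsTorsion ↥L := by
    intro x
    have hx : ∀ z, z ∈ Subgroup.closure F → IsOfFinOrder z := by
      intro z hz
      refine Subgroup.closure_induction ?_ ?_ ?_ ?_ hz
      · rintro _ ⟨⟨a, b⟩, ⟨ha, hb⟩, rfl⟩
        have he : pf (a, b) = νA (π b.out) a := by
          calc pf (a, b) = ⁅π a.out, π b.out⁆ := rfl
            _ = νA (π b.out) (Abelianization.of a.out) := (hνA _ _).symm
            _ = νA (π b.out) a := by rw [hout]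
        rw [he]
        exact (νA (π b.out)).isOfFinOrder ha
      · exact IsOfFinOrder.one
      · intro a b ha hb iha ihb
        have hcab : Commute a b := (Subgroup.mem_center_iff.mp (hLcent ha) b).symm
        exact hcab.isOfFinOrder_mul iha ihb
      · intro a ha iha
        exact iha.inv
    have h2 := hx x.1 x.2
    rw [isOfFinOrder_iff_pow_eq_one] at h2 ⊢
    obtain ⟨n, hn, h1⟩ := h2
    exact ⟨n, hn, by ext; simpa using h1⟩
  haveI hLfin : Finite ↥L := open IsMulCommutative in CommGroup.finite_of_fg_torsion _ hLtor
  -- the homomorphism f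
  have hle : K.subgroupOf (commutator G) ≤
      (N.subgroupOf (commutator G)).comap (MonoidHom.id ↥(commutator G)) :=
    fun x hx => hKN hx
  let f := QuotientGroup.map (K.subgroupOf (commutator G)) (N.subgroupOf (commutator G))
    (MonoidHom.id ↥(commutator G)) hle
  have hmk : ∀ x : ↥(commutator G),
      f (QuotientGroup.mk x) = QuotientGroup.mk x := fun x => rfl
  have hsurj : Function.Surjective f := by
    intro y
    obtain ⟨x, rfl⟩ := QuotientGroup.mk_surjective y
    exact ⟨QuotientGroup.mk x, hmk x⟩
  -- the kernel is finite
  let χ : ↥(N.subgroupOf (commutator G)) →*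
      (↥(commutator G) ⧸ K.subgroupOf (commutator G)) :=
    (QuotientGroup.mk' _).comp (N.subgroupOf (commutator G)).subtype
  let ρ : ↥(N.subgroupOf (commutator G)) →* G ⧸ K :=
    π.comp ((commutator G).subtype.comp (N.subgroupOf (commutator G)).subtype)
  have hkerk : χ.ker = ρ.ker := by
    ext x
    simp only [MonoidHom.mem_ker, MonoidHom.comp_apply, χ, ρ]
    rw [QuotientGroup.mk'_apply, QuotientGroup.eq_one_iff, QuotientGroup.mk'_apply,
      QuotientGroup.eq_one_iff]
    exact Iff.rfl
  have hρrange : ρ.range ≤ L := by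
    rintro _ ⟨x, rfl⟩
    have hNL : N ≤ L.comap π := by
      rw [hN]
      refine Subgroup.commutator_le.mpr ?_
      intro g₁ h₁ g₂ _
      exact hgen g₁ h₁ g₂
    exact hNL (Subgroup.mem_subgroupOf.mp x.2)
  haveI : Finite ↥ρ.range :=
    Finite.of_injective (Subgroup.inclusion hρrange) (Subgroup.inclusion_injective _)
  haveI hFinQ : Finite (↥(N.subgroupOf (commutator G)) ⧸ χ.ker) := by
    rw [hkerk]
    exact Finite.of_equiv _ (QuotientGroup.quotientKerEquivRange ρ).symm.toEquiv
  haveI hFinR : Finite ↥χ.range :=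
    Finite.of_equiv _ (QuotientGroup.quotientKerEquivRange χ).toEquiv
  have hsub : f.ker ≤ χ.range := by
    intro z hz
    obtain ⟨x, rfl⟩ := QuotientGroup.mk_surjective z
    have hxN : x ∈ N.subgroupOf (commutator G) := by
      rw [← QuotientGroup.eq_one_iff (N := N.subgroupOf (commutator G)) x]
      rw [← hmk x]
      exact hz
    exact ⟨⟨x, hxN⟩, rfl⟩
  have hkerfin : Finite f.ker :=
    Finite.of_injective (Subgroup.inclusion hsub) (Subgroup.inclusion_injective _)
  exact ⟨f, hsurj, hmk, hkerfin⟩
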